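/- For n = k·m, the DFT factors as F_n = L^n_k (I_k ⊗ F_m) W^n_m L^n_m (I_m ⊗ F_k) L^n_k, a splitting rule in which both DFT factors appear in the form I ⊗ F. -/

import Mathlib

open Matrix Complex

/-- The primitive `n`-th root of unity `ω_n = exp(-2πi/n)`. -/
noncomputable def tw (n : ℕ) : ℂ := Complex.exp (-(2 * Real.pi * Complex.I) / n)

/-- The `n × n` DFT matrix `F_n = [ω_n^{kl}]`. -/
noncomputable def DFT (n : ℕ) : Matrix (Fin n) (Fin n) ℂ :=
  fun r c => tw n ^ (r.val * c.val)

/-- The stride permutation `L^n_k` (with `n = k*m`), sending the basis vector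
`e_{i,k} ⊗ e_{j,m}` (flat index `i*m+j`) to `e_{j,m} ⊗ e_{i,k}` (flat index `j*k+i`). -/
noncomputable def Lmat (n k m : ℕ) : Matrix (Fin n) (Fin n) ℂ :=
  fun r c => if r.val = (c.val % m) * k + c.val / m then 1 else 0

/-- The diagonal twiddle matrix `W^n_m` (with `n = k*m`), acting on
`e_{i,k} ⊗ e_{j,m}` (flat index `c = i*m+j`) by the scalar `ω_n^{ij}`. -/
noncomputable def Wmat (n m : ℕ) : Matrix (Fin n) (Fin n) ℂ :=
  fun r c => if r = c then tw n ^ ((c.val / m) * (c.val % m)) else 0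

/-- Entry of a `k × k` matrix at natural-number indices (0 outside range). -/
noncomputable def ment {k : ℕ} (A : Matrix (Fin k) (Fin k) ℂ) (i j : ℕ) : ℂ :=
  if h : i < k ∧ j < k then A ⟨i, h.1⟩ ⟨j, h.2⟩ else 0

/-- Kronecker product `A ⊗ B` of a `k×k` and an `m×m` matrix, written on flat
indices of size `n = k*m` (row-major: index `i*m+j ↔ e_{i,k} ⊗ e_{j,m}`). -/
noncomputable def kron (n k m : ℕ) (A : Matrix (Fin k) (Fin k) ℂ)
    (B : Matrix (Fin m) (Fin m) ℂ) : Matrix (Fin n) (Fin n) ℂ :=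
  fun r c => ment A (r.val / m) (c.val / m) * ment B (r.val % m) (c.val % m)

/-- Value of a digit list `[d_0, d_1, …]` in the mixed-radix system with radices
`[c_0, c_1, …]` (least-significant first): `d_0 + c_0*(d_1 + c_1*(…))`. -/
def mval : List ℕ → List ℕ → ℕ
  | c :: cs, d :: ds => d + c * mval cs ds
  | _, _ => 0

/-- Digits (least-significant first) of `x` in the mixed-radix system with
radices `[c_0, c_1, …]` (least-significant first). -/
def mdig : List ℕ → ℕ → List ℕ
  | [], _ => []
  | c :: cs, x => x % c :: mdig cs (x / c)

/-- The digit-reversal permutation `P_α` of a multi-index `α = (n_K, …, n_0)`,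
where `a = [n_0, …, n_K]` lists the radices of the system generated by `α`
least-significant first: `x` is decomposed in the system generated by
`α* = (n_0, …, n_K)` and re-read with reversed digits in the system of `α`. -/
def mrev (a : List ℕ) (x : ℕ) : ℕ := mval a ((mdig a.reverse x).reverse)

/-- The digit-reversal permutation matrix `S_α`, `S_α e_x = e_{P_α x}`;
`a = [n_0, …, n_K]` lists `α = (n_K, …, n_0)` least-significant first. -/
noncomputable def Smat (n : ℕ) (a : List ℕ) : Matrix (Fin n) (Fin n) ℂ :=
  fun r c => if r.val = mrev a c.val then 1 else 0

/-- The diagonal matrix `V_{k,m,n}` of size `N = k*m*n`, acting on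
`e_{i,k} ⊗ e_{j,m} ⊗ e_{ℓ,n}` (flat index `i*(m*n) + j*n + ℓ`) by
`ω_{kmn}^{i(ℓ m + j)}`. -/
noncomputable def Vmat (N k m n : ℕ) : Matrix (Fin N) (Fin N) ℂ :=
  fun r c => if r = c then
    tw (k * m * n) ^ ((c.val / (m * n)) * ((c.val % n) * m + (c.val / n) % m)) else 0

/- ===== auxiliary lemmas ===== -/

lemma idx_lt' {a b p q : ℕ} (ha : a < p) (hb : b < q) : a * q + b < p * q := by
  have h1 : a * q + b < (a + 1) * q := by
    rw [add_mul, one_mul]; exact Nat.add_lt_add_left hb _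
  exact h1.trans_le (Nat.mul_le_mul (Nat.succ_le_of_lt ha) (le_refl q))

lemma dm1' {a b q : ℕ} (hb : b < q) : (a * q + b) % q = b := by
  rw [Nat.mul_comm, Nat.mul_add_mod, Nat.mod_eq_of_lt hb]

lemma dm2' {a b q : ℕ} (hb : b < q) : (a * q + b) / q = a := by
  rw [Nat.mul_comm, Nat.mul_add_div (by omega), Nat.div_eq_of_lt hb, Nat.add_zero]

lemma bnd1' {k m : ℕ} (hk : 0 < k) (hm : 0 < m) (c : Fin (k * m)) :
    (c.val % m) * k + c.val / m < k * m :=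
  (idx_lt' (Nat.mod_lt _ hm) ((Nat.div_lt_iff_lt_mul hm).2 c.isLt)).trans_eq (Nat.mul_comm m k)

lemma bnd2' {k m : ℕ} (hk : 0 < k) (hm : 0 < m) (t : Fin (k * m)) :
    (t.val % k) * m + t.val / k < k * m :=
  idx_lt' (Nat.mod_lt _ hk) ((Nat.div_lt_iff_lt_mul hk).2 (t.isLt.trans_eq (Nat.mul_comm k m)))

lemma mul_L_right' {k m : ℕ} (hk : 0 < k) (hm : 0 < m)
    (X : Matrix (Fin (k * m)) (Fin (k * m)) ℂ) (r c : Fin (k * m)) :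
    (X * Lmat (k * m) k m) r c = X r ⟨(c.val % m) * k + c.val / m, bnd1' hk hm c⟩ := by
  rw [Matrix.mul_apply]
  have h : ∀ j : Fin (k * m), Lmat (k * m) k m j c
      = if j = (⟨(c.val % m) * k + c.val / m, bnd1' hk hm c⟩ : Fin (k * m)) then 1 else 0 := by
    intro j
    simp [Lmat, Fin.ext_iff]
  simp_rw [h, mul_ite, mul_one, mul_zero, Finset.sum_ite_eq', Finset.mem_univ, if_true]

lemma mul_L_right'' {k m : ℕ} (hk : 0 < k) (hm : 0 < m)
    (X : Matrix (Fin (k * m)) (Fin (k * m)) ℂ) (r c : Fin (k * m)) :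
    (X * Lmat (k * m) m k) r c = X r ⟨(c.val % k) * m + c.val / k, bnd2' hk hm c⟩ := by
  rw [Matrix.mul_apply]
  have h : ∀ j : Fin (k * m), Lmat (k * m) m k j c
      = if j = (⟨(c.val % k) * m + c.val / k, bnd2' hk hm c⟩ : Fin (k * m)) then 1 else 0 := by
    intro j
    simp [Lmat, Fin.ext_iff]
  simp_rw [h, mul_ite, mul_one, mul_zero, Finset.sum_ite_eq', Finset.mem_univ, if_true]

lemma mul_L_left' {k m : ℕ} (hk : 0 < k) (hm : 0 < m)
    (X : Matrix (Fin (k * m)) (Fin (k * m)) ℂ) (r c : Fin (k * m)) :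
    (Lmat (k * m) k m * X) r c = X ⟨(r.val % k) * m + r.val / k, bnd2' hk hm r⟩ c := by
  rw [Matrix.mul_apply]
  have h : ∀ j : Fin (k * m), Lmat (k * m) k m r j
      = if j = (⟨(r.val % k) * m + r.val / k, bnd2' hk hm r⟩ : Fin (k * m)) then 1 else 0 := by
    intro j
    have hiff : (r.val = (j.val % m) * k + j.val / m) ↔
        j = (⟨(r.val % k) * m + r.val / k, bnd2' hk hm r⟩ : Fin (k * m)) := by
      constructor
      · intro hj
        have hjd : j.val / m < k := (Nat.div_lt_iff_lt_mul hm).2 j.isLt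
        apply Fin.ext
        show j.val = (r.val % k) * m + r.val / k
        rw [hj, dm1' hjd, dm2' hjd]
        exact (Nat.div_add_mod' j.val m).symm
      · intro hj
        have hrd : r.val / k < m :=
          (Nat.div_lt_iff_lt_mul hk).2 (r.isLt.trans_eq (Nat.mul_comm k m))
        have hjv : j.val = (r.val % k) * m + r.val / k := by rw [hj]
        rw [hjv, dm1' hrd, dm2' hrd]
        exact (Nat.div_add_mod' r.val k).symm
    simp only [Lmat, hiff]
  simp_rw [h, ite_mul, one_mul, zero_mul, Finset.sum_ite_eq', Finset.mem_univ, if_true]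

lemma mul_W' {n m : ℕ} (X : Matrix (Fin n) (Fin n) ℂ) (r c : Fin n) :
    (X * Wmat n m) r c = X r c * tw n ^ ((c.val / m) * (c.val % m)) := by
  rw [Matrix.mul_apply]
  have h : ∀ j : Fin n, Wmat n m j c
      = if j = c then tw n ^ ((c.val / m) * (c.val % m)) else 0 := fun j => rfl
  simp_rw [h, mul_ite, mul_zero, Finset.sum_ite_eq', Finset.mem_univ, if_true]

lemma tw_pow_mul' {k m : ℕ} (hk : 0 < k) (hm : 0 < m) : tw (k * m) ^ k = tw m := by
  rw [tw, tw, ← Complex.exp_nat_mul]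
  congr 1
  have hk' : (k : ℂ) ≠ 0 := Nat.cast_ne_zero.2 hk.ne'
  have hm' : (m : ℂ) ≠ 0 := Nat.cast_ne_zero.2 hm.ne'
  push_cast
  field_simp

lemma tw_pow_self' {n : ℕ} (hn : 0 < n) : tw n ^ n = 1 := by
  rw [tw, ← Complex.exp_nat_mul]
  have h : (n : ℂ) * (-(2 * (Real.pi : ℂ) * Complex.I) / n) = -(2 * (Real.pi : ℂ) * Complex.I) := by
    have hn' : (n : ℂ) ≠ 0 := Nat.cast_ne_zero.2 hn.ne'
    field_simp
  rw [h, Complex.exp_neg, Complex.exp_two_pi_mul_I, inv_one]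

lemma ment_one {k : ℕ} {i j : ℕ} (hi : i < k) (hj : j < k) :
    ment (1 : Matrix (Fin k) (Fin k) ℂ) i j = if i = j then 1 else 0 := by
  rw [ment, dif_pos ⟨hi, hj⟩, Matrix.one_apply]
  simp only [Fin.mk.injEq]

lemma ment_DFT {q : ℕ} {i j : ℕ} (hi : i < q) (hj : j < q) :
    ment (DFT q) i j = tw q ^ (i * j) := by
  rw [ment, dif_pos ⟨hi, hj⟩]; rfl

/-- `F_n = L^n_k (I_k ⊗ F_m) W^n_m L^n_m (I_m ⊗ F_k) L^n_k` for `n = k·m`. -/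
theorem dft_split_both_tensor (k m n : ℕ) (hk : 0 < k) (hm : 0 < m) (hn : n = k * m) :
    DFT n = Lmat n k m * kron n k m 1 (DFT m) * Wmat n m * Lmat n m k *
      kron n m k 1 (DFT k) * Lmat n k m := by
  subst hn
  ext r c
  have hrk : r.val % k < k := Nat.mod_lt _ hk
  have hrdk : r.val / k < m := (Nat.div_lt_iff_lt_mul hk).2 (r.isLt.trans_eq (Nat.mul_comm k m))
  have hcm : c.val % m < m := Nat.mod_lt _ hm
  have hcdm : c.val / m < k := (Nat.div_lt_iff_lt_mul hm).2 c.isLt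
  rw [mul_L_right' hk hm, Matrix.mul_apply]
  simp_rw [mul_L_right'' hk hm, mul_W', mul_L_left' hk hm]
  rw [Finset.sum_eq_single_of_mem
      (⟨(c.val % m) * k + r.val % k, (idx_lt' hcm hrk).trans_eq (Nat.mul_comm m k)⟩ : Fin (k * m))
      (Finset.mem_univ _) ?hz]
  case hz =>
    intro j _ hj
    have hjk : j.val % k < k := Nat.mod_lt _ hk
    have hjdk : j.val / k < m := (Nat.div_lt_iff_lt_mul hk).2 (j.isLt.trans_eq (Nat.mul_comm k m))
    simp only [kron, Fin.val_mk]
    rw [dm1' hrdk, dm2' hrdk, dm1' hjdk, dm2' hjdk, dm1' hcdm, dm2' hcdm]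
    rw [ment_one hrk hjk, ment_DFT hrdk hjdk, ment_one hjdk hcm, ment_DFT hjk hcdm]
    by_cases h1 : r.val % k = j.val % k
    · by_cases h2 : j.val / k = c.val % m
      · exfalso
        apply hj
        apply Fin.ext
        show j.val = (c.val % m) * k + r.val % k
        rw [← h2, h1]
        exact (Nat.div_add_mod' j.val k).symm
      · rw [if_neg h2]; ring
    · rw [if_neg h1]; ring
  · -- main term
    have ht1 : ((c.val % m) * k + r.val % k) % k = r.val % k := dm1' hrk
    have ht2 : ((c.val % m) * k + r.val % k) / k = c.val % m := dm2' hrk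
    simp only [kron, Fin.val_mk]
    rw [ht1, ht2, dm1' hrdk, dm2' hrdk, dm1' hcm, dm2' hcm, dm1' hcdm, dm2' hcdm]
    rw [ment_one hrk hrk, ment_DFT hrdk hcm, ment_one hcm hcm, ment_DFT hrk hcdm]
    rw [if_pos rfl, if_pos rfl]
    simp only [DFT]
    have htwm : tw m = tw (k * m) ^ k := (tw_pow_mul' hk hm).symm
    have htwk : tw k = tw (k * m) ^ m := by
      rw [Nat.mul_comm]; exact (tw_pow_mul' hm hk).symm
    rw [htwm, htwk, ← pow_mul, ← pow_mul]
    have hexp : r.val * c.val =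
        (k * (r.val / k * (c.val % m)) + (r.val % k * (c.val % m) +
          m * (r.val % k * (c.val / m)))) + (k * m) * (r.val / k * (c.val / m)) := by
      calc r.val * c.val = (k * (r.val / k) + r.val % k) * (m * (c.val / m) + c.val % m) := by
            rw [Nat.div_add_mod, Nat.div_add_mod]
        _ = _ := by ring
    rw [hexp, pow_add, pow_add, pow_add,
      pow_mul (tw (k * m)) (k * m) (r.val / k * (c.val / m)),
      tw_pow_self' (Nat.mul_pos hk hm), one_pow, mul_one]
    ring
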